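/- Let K be an algebraically closed field, n ≥ 1, and let A = K[x,y]/(xⁿy − 1). Then A is isomorphic as a K-algebra to the Laurent polynomial ring K[x, x⁻¹], and A does not satisfy the Strong Goldbach Condition (there exists an element of A not expressible as a sum of two irreducible elements). -/

import Mathlib

open LaurentPolynomial Polynomial

lemma notUnit_toLaurent {K : Type*} [Field K] {p : K[X]} (h0 : p.coeff 0 ≠ 0)
    (h1 : 1 ≤ p.natDegree) : ¬ IsUnit (p.toLaurent) := by
  rintro hu
  obtain ⟨q, hq⟩ := isUnit_iff_exists_inv.mp hu
  obtain ⟨M, q', hq'⟩ := exists_T_pow q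
  have hdvd : p ∣ X ^ M := by
    refine ⟨q', Polynomial.toLaurent_injective ?_⟩
    rw [map_mul, hq', Polynomial.toLaurent_X_pow, ← mul_assoc, hq, one_mul]
  obtain ⟨i, hi, u, hu'⟩ := (dvd_prime_pow Polynomial.prime_X M).mp hdvd
  rcases Nat.eq_zero_or_pos i with rfl | hipos
  · have hpu : IsUnit p := by
      have : IsUnit (p * ↑u) := by rw [hu']; simpa using isUnit_one
      exact isUnit_of_mul_isUnit_left this
    have := Polynomial.natDegree_eq_zero_of_isUnit hpu
    omega
  · obtain ⟨c, hc0, hcu⟩ := Polynomial.isUnit_iff.mp u.isUnit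
    have hc : (p * ↑u).coeff 0 = p.coeff 0 * c := by
      rw [← hcu, Polynomial.coeff_mul_C]
    rw [hu', Polynomial.coeff_X_pow] at hc
    rw [if_neg (by omega)] at hc
    exact h0 (by rcases mul_eq_zero.mp hc.symm with h | h; exact h; exact absurd h hc0.ne_zero)

lemma irr_support {K : Type*} [Field K] [IsAlgClosed K] (f : LaurentPolynomial K)
    (hf : Irreducible f) : ∃ m : ℤ, f.coeff.support ⊆ {m, m + 1} := by
  obtain ⟨N, f', hNf⟩ := exists_T_pow f
  have hf0 : f ≠ 0 := hf.ne_zero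
  have hf'0 : f' ≠ 0 := by
    intro h
    rw [h, map_zero] at hNf
    rcases mul_eq_zero.mp hNf.symm with h | h
    · exact hf0 h
    · exact (isUnit_T (R := K) N).ne_zero h
  obtain ⟨q, hq, hXq⟩ := f'.exists_eq_pow_rootMultiplicity_mul_and_not_dvd hf'0 0
  rw [map_zero, sub_zero] at hq hXq
  set m' : ℕ := f'.rootMultiplicity 0 with hm'
  -- q has nonzero constant coefficient
  have hq0 : q.coeff 0 ≠ 0 := fun h => hXq (Polynomial.X_dvd_iff.mpr h)
  -- f = toLaurent q * T (m' - N)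
  have hfq : f = toLaurent q * T ((m' : ℤ) - N) := by
    have h1 : toLaurent f' = T (m' : ℤ) * toLaurent q := by
      rw [hq, map_mul, Polynomial.toLaurent_X_pow]
    have h2 : f * T (N : ℤ) * T (-(N : ℤ)) = toLaurent q * T (m' : ℤ) * T (-(N : ℤ)) := by
      rw [← hNf, h1, mul_comm (T (m' : ℤ))]
    rw [mul_T_assoc, mul_T_assoc] at h2
    simpa [T_sub, sub_eq_add_neg] using h2
  -- toLaurent q is irreducible
  have hassoc : Associated f (toLaurent q) := by
    refine Associated.symm ⟨(isUnit_T (R := K) ((m' : ℤ) - N)).unit, ?_⟩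
    rw [IsUnit.unit_spec, ← hfq]
  have hqirr : Irreducible (toLaurent q) := hassoc.irreducible hf
  -- q has natDegree ≤ 1
  have hdeg : q.natDegree ≤ 1 := by
    by_contra hd
    push_neg at hd
    have hq0' : q ≠ 0 := fun h => by simp [h] at hq0
    obtain ⟨r, hr⟩ := IsAlgClosed.exists_root q (by
      intro h
      have := Polynomial.natDegree_eq_zero_iff_degree_le_zero.mpr (le_of_eq h) 
      omega)
    have hdvd : (X - Polynomial.C r) ∣ q := Polynomial.dvd_iff_isRoot.mpr hr
    obtain ⟨q₂, hq₂⟩ := hdvd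
    have hr0 : r ≠ 0 := by
      intro h
      rw [h] at hq₂
      simp only [map_zero, sub_zero] at hq₂
      exact hXq (Dvd.intro _ hq₂.symm)
    have hq₂0 : q₂ ≠ 0 := by
      intro (h : q₂ = 0)
      exact hq0' (by rw [hq₂, h, mul_zero])
    have hq₂c : q₂.coeff 0 ≠ 0 := by
      intro h
      apply hq0
      rw [hq₂, Polynomial.mul_coeff_zero, h, mul_zero]
    have hq₂d : 1 ≤ q₂.natDegree := by
      have hX0 : (X - Polynomial.C r) ≠ 0 := Polynomial.X_sub_C_ne_zero r
      have := Polynomial.natDegree_mul hX0 hq₂0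
      rw [← hq₂, Polynomial.natDegree_X_sub_C] at this
      omega
    rw [hq₂, map_mul] at hqirr
    rcases hqirr.isUnit_or_isUnit rfl with h | h
    · exact notUnit_toLaurent (by simp [hr0]) (by simp [Polynomial.natDegree_X_sub_C]) h
    · exact notUnit_toLaurent hq₂c hq₂d h
  refine ⟨(m' : ℤ) - N, ?_⟩
  set s : ℤ := (m' : ℤ) - N with hs
  have hqform := Polynomial.eq_X_add_C_of_natDegree_le_one hdeg
  have hfform : f = LaurentPolynomial.C (q.coeff 1) * T (1 + s)
      + LaurentPolynomial.C (q.coeff 0) * T s := by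
    rw [hfq]
    nth_rewrite 1 [hqform]
    rw [map_add, map_mul, Polynomial.toLaurent_C, Polynomial.toLaurent_C,
      Polynomial.toLaurent_X, add_mul, mul_T_assoc]
  rw [hfform, AddMonoidAlgebra.coeff_add]
  refine (Finsupp.support_add).trans (Finset.union_subset ?_ ?_)
  · exact (support_C_mul_T _ _).trans (by intro k hk; simp at hk ⊢; omega)
  · exact (support_C_mul_T _ _).trans (by intro k hk; simp at hk ⊢; omega)


section gold

variable (K : Type*) [Field K] (n : ℕ)

noncomputable abbrev gP : MvPolynomial (Fin 2) K :=
  (MvPolynomial.X 0) ^ n * MvPolynomial.X 1 - 1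

noncomputable abbrev gI : Ideal (MvPolynomial (Fin 2) K) := Ideal.span {gP K n}

noncomputable def gF : MvPolynomial (Fin 2) K →ₐ[K] LaurentPolynomial K :=
  MvPolynomial.aeval (fun i => if i = 0 then T 1 else T (-(n : ℤ)))

lemma gF_X0 : gF K n (MvPolynomial.X 0) = T 1 := by
  rw [gF, MvPolynomial.aeval_X]; simp

lemma gF_X1 : gF K n (MvPolynomial.X 1) = T (-(n : ℤ)) := by
  rw [gF, MvPolynomial.aeval_X]; simp

lemma gF_I : ∀ a ∈ gI K n, gF K n a = 0 := by
  have hF0 : gF K n (gP K n) = 0 := by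
    rw [gP, map_sub, map_mul, map_pow, map_one, gF_X0, gF_X1, T_pow, mul_one, ← T_add]
    simp
  intro a ha
  rw [gI, Ideal.mem_span_singleton] at ha
  obtain ⟨c, rfl⟩ := ha
  rw [map_mul, hF0, zero_mul]

noncomputable def gphi : (MvPolynomial (Fin 2) K ⧸ gI K n) →ₐ[K] LaurentPolynomial K :=
  Ideal.Quotient.liftₐ _ (gF K n) (gF_I K n)

lemma gphi_mk (p : MvPolynomial (Fin 2) K) :
    gphi K n (Ideal.Quotient.mk (gI K n) p) = gF K n p := by
  rw [gphi, Ideal.Quotient.liftₐ_apply]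
  rfl

noncomputable abbrev gx : MvPolynomial (Fin 2) K ⧸ gI K n :=
  Ideal.Quotient.mk (gI K n) (MvPolynomial.X 0)

noncomputable abbrev gy : MvPolynomial (Fin 2) K ⧸ gI K n :=
  Ideal.Quotient.mk (gI K n) (MvPolynomial.X 1)

lemma gxy : gx K n ^ n * gy K n = 1 := by
  have h0 : Ideal.Quotient.mk (gI K n) (gP K n) = 0 := by
    rw [Ideal.Quotient.eq_zero_iff_mem]
    exact Ideal.subset_span rfl
  have h1 : gx K n ^ n * gy K n - 1 = 0 := by
    rw [gx, gy, ← map_pow, ← map_mul, ← map_one (Ideal.Quotient.mk (gI K n)), ← map_sub]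
    exact h0
  linear_combination h1

lemma gphi_x : gphi K n (gx K n) = T 1 := by rw [gphi_mk, gF_X0]

lemma gphi_y : gphi K n (gy K n) = T (-(n : ℤ)) := by rw [gphi_mk, gF_X1]

variable (hn : 1 ≤ n)
include hn

lemma gxx : gx K n * gx K n ^ (n - 1) = gx K n ^ n := by
  rw [← pow_succ']
  congr 1
  omega

noncomputable def gu : (MvPolynomial (Fin 2) K ⧸ gI K n)ˣ :=
  ⟨gx K n, gx K n ^ (n - 1) * gy K n,
    by rw [← mul_assoc, gxx K n hn, gxy],
    by rw [mul_comm, ← mul_assoc, gxx K n hn, gxy]⟩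

noncomputable def gpsi : LaurentPolynomial K →ₐ[K] (MvPolynomial (Fin 2) K ⧸ gI K n) :=
  AddMonoidAlgebra.lift K _ ℤ ((Units.coeHom _).comp (zpowersHom _ (gu K n hn)))

lemma gpsi_T (k : ℤ) : gpsi K n hn (T k) = ((gu K n hn ^ k : _ˣ) : _) := by
  show gpsi K n hn (AddMonoidAlgebra.single k 1) = _
  rw [gpsi, AddMonoidAlgebra.lift_single]
  simp

lemma gphi_inv : gphi K n (gx K n ^ (n - 1) * gy K n) = T (-1) := by
  rw [map_mul, map_pow, gphi_x, gphi_y, T_pow, ← T_add]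
  congr 1
  push_cast [Nat.cast_sub hn]
  ring

lemma gcomp1 : (gphi K n).comp (gpsi K n hn) = AlgHom.id K (LaurentPolynomial K) := by
  apply AddMonoidAlgebra.algHom_ext ?_ (Subsingleton.elim _ _)
  intro k
  show gphi K n (gpsi K n hn (T k)) = T k
  rw [gpsi_T]
  set v : (LaurentPolynomial K)ˣ :=
    Units.map (gphi K n : _ →* LaurentPolynomial K) (gu K n hn) with hv
  have hvval : (v : LaurentPolynomial K) = T 1 := gphi_x K n
  have hvinv : ((v⁻¹ : _ˣ) : LaurentPolynomial K) = T (-1) := by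
    rw [hv, ← map_inv]
    exact gphi_inv K n hn
  have h1 : gphi K n ((gu K n hn ^ k : _ˣ) : MvPolynomial (Fin 2) K ⧸ gI K n)
      = ((v ^ k : _ˣ) : LaurentPolynomial K) := by
    rw [hv, ← map_zpow]
    rfl
  rw [h1]
  induction k using Int.rec with
  | ofNat m =>
    rw [Int.ofNat_eq_coe, zpow_natCast, Units.val_pow_eq_pow_val, hvval, T_pow, mul_one]
  | negSucc m =>
    rw [zpow_negSucc, ← inv_pow, Units.val_pow_eq_pow_val, hvinv, T_pow]
    congr 1
    simp [Int.negSucc_eq]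

lemma gkey : (gx K n ^ (n - 1) * gy K n) ^ n = gy K n := by
  have h1 : (gx K n ^ (n - 1) * gy K n) ^ n
      = (gx K n ^ n) ^ (n - 1) * (gy K n ^ (n - 1) * gy K n) := by
    rw [mul_pow, ← pow_mul, ← pow_mul, Nat.mul_comm (n - 1) n]
    congr 1
    rw [← pow_succ]
    congr 1
    omega
  rw [h1, ← mul_assoc, ← mul_pow, gxy, one_pow, one_mul]

lemma gcomp2 : (gpsi K n hn).comp (gphi K n) = AlgHom.id K (MvPolynomial (Fin 2) K ⧸ gI K n) := by
  apply Ideal.Quotient.algHom_ext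
  apply MvPolynomial.algHom_ext
  intro i
  fin_cases i
  · show gpsi K n hn (gphi K n (gx K n)) = gx K n
    rw [gphi_x, gpsi_T, zpow_one]
    rfl
  · show gpsi K n hn (gphi K n (gy K n)) = gy K n
    rw [gphi_y, gpsi_T, zpow_neg, zpow_natCast, ← inv_pow, Units.val_pow_eq_pow_val]
    exact gkey K n hn

noncomputable def gEquiv : (MvPolynomial (Fin 2) K ⧸ gI K n) ≃ₐ[K] LaurentPolynomial K :=
  AlgEquiv.ofAlgHom (gphi K n) (gpsi K n hn) (gcomp1 K n hn) (gcomp2 K n hn)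

lemma gEquiv_apply (a : MvPolynomial (Fin 2) K ⧸ gI K n) : gEquiv K n hn a = gphi K n a := rfl

end gold


theorem stmt_17 (K : Type*) [Field K] [IsAlgClosed K] (n : ℕ) (hn : 1 ≤ n) :
    Nonempty ((MvPolynomial (Fin 2) K ⧸
        Ideal.span {((MvPolynomial.X 0) ^ n * MvPolynomial.X 1 - 1 : MvPolynomial (Fin 2) K)})
      ≃ₐ[K] LaurentPolynomial K) ∧
    ∃ a : MvPolynomial (Fin 2) K ⧸
        Ideal.span {((MvPolynomial.X 0) ^ n * MvPolynomial.X 1 - 1 : MvPolynomial (Fin 2) K)},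
      ¬ ∃ g h, Irreducible g ∧ Irreducible h ∧ a = g + h := by
  refine ⟨⟨gEquiv K n hn⟩, ?_⟩
  set P : MvPolynomial (Fin 2) K :=
    1 + MvPolynomial.X 0 + (MvPolynomial.X 0) ^ 2 + (MvPolynomial.X 0) ^ 3 +
      (MvPolynomial.X 0) ^ 4 with hP
  refine ⟨Ideal.Quotient.mk (gI K n) P, ?_⟩
  rintro ⟨g, h, hg, hh, hsum⟩
  set e := gEquiv K n hn with he
  have hEP : e (Ideal.Quotient.mk (gI K n) P) = 1 + T 1 + T 2 + T 3 + T 4 := by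
    rw [gEquiv_apply, gphi_mk, hP]
    rw [map_add, map_add, map_add, map_add, map_one, map_pow, map_pow, map_pow, gF_X0,
      T_pow, T_pow, T_pow, mul_one, mul_one, mul_one]
    norm_num
  have hcoeff : ∀ k ∈ ({0, 1, 2, 3, 4} : Finset ℤ), (e (Ideal.Quotient.mk (gI K n) P)).coeff k ≠ 0 := by
    intro k hk
    rw [hEP, AddMonoidAlgebra.coeff_add, AddMonoidAlgebra.coeff_add, AddMonoidAlgebra.coeff_add,
      AddMonoidAlgebra.coeff_add, Finsupp.add_apply, Finsupp.add_apply, Finsupp.add_apply, Finsupp.add_apply,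
      show (1 : LaurentPolynomial K) = T 0 from T_zero.symm,
      T_apply, T_apply, T_apply, T_apply, T_apply]
    fin_cases hk <;> norm_num
  have hsupsub : ({0, 1, 2, 3, 4} : Finset ℤ) ⊆ (e (Ideal.Quotient.mk (gI K n) P)).coeff.support :=
    fun k hk => Finsupp.mem_support_iff.mpr (hcoeff k hk)
  have hge : Irreducible (e g) := (MulEquiv.irreducible_iff e).mpr hg
  have hhe : Irreducible (e h) := (MulEquiv.irreducible_iff e).mpr hh
  obtain ⟨m1, hm1⟩ := irr_support _ hge
  obtain ⟨m2, hm2⟩ := irr_support _ hhe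
  have hsub2 : (e (Ideal.Quotient.mk (gI K n) P)).coeff.support ⊆
      ({m1, m1 + 1} ∪ {m2, m2 + 1} : Finset ℤ) := by
    rw [hsum, map_add, AddMonoidAlgebra.coeff_add]
    exact (Finsupp.support_add).trans (Finset.union_subset_union hm1 hm2)
  have h5 : (5 : ℕ) ≤ 4 := by
    calc (5 : ℕ) = ({0, 1, 2, 3, 4} : Finset ℤ).card := by decide
      _ ≤ ((e (Ideal.Quotient.mk (gI K n) P)).coeff.support).card := Finset.card_le_card hsupsub
      _ ≤ ({m1, m1 + 1} ∪ {m2, m2 + 1} : Finset ℤ).card := Finset.card_le_card hsub2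
      _ ≤ ({m1, m1 + 1} : Finset ℤ).card + ({m2, m2 + 1} : Finset ℤ).card :=
        Finset.card_union_le _ _
      _ ≤ 2 + 2 := add_le_add
        (by simpa using Finset.card_insert_le m1 {m1 + 1})
        (by simpa using Finset.card_insert_le m2 {m2 + 1})
  omega
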